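/- Let R be a commutative ring and a ∈ R. Let f, g, h, s, t ∈ R[X] be polynomials with h monic such that f ≡ g·h (mod a·R[X]) and s·g + t·h ≡ 1 (mod a·R[X]). Then there exist polynomials g*, h*, s*, t* ∈ R[X] with h* monic, deg h* = deg h, g* ≡ g (mod a·R[X]), h* ≡ h (mod a·R[X]), such that f ≡ g*·h* (mod a²·R[X]) and s*·g* + t*·h* ≡ 1 (mod a²·R[X]). -/

import Mathlib

open Polynomial

/-- Basic Hensel step: lift a factorisation `f ≡ g·h (mod a)` with Bézout
relation `s·g + t·h ≡ 1 (mod a)` to a factorisation modulo `a²`. -/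
theorem hensel_step {R : Type*} [CommRing R] (a : R)
    (f g h s t : R[X]) (hmon : h.Monic)
    (hfac : ∀ i, a ∣ (f - g * h).coeff i)
    (hbez : ∀ i, a ∣ (s * g + t * h - 1).coeff i) :
    ∃ g' h' s' t' : R[X], h'.Monic ∧ h'.degree = h.degree ∧
      (∀ i, a ∣ (g' - g).coeff i) ∧ (∀ i, a ∣ (h' - h).coeff i) ∧
      (∀ i, a ^ 2 ∣ (f - g' * h').coeff i) ∧
      (∀ i, a ^ 2 ∣ (s' * g' + t' * h' - 1).coeff i) := by
  rcases subsingleton_or_nontrivial R with hR | hR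
  · exact ⟨g, h, s, t, hmon, rfl,
      fun i => by rw [Subsingleton.elim ((g - g).coeff i) (0 : R)]; exact dvd_zero a,
      fun i => by rw [Subsingleton.elim ((h - h).coeff i) (0 : R)]; exact dvd_zero a,
      fun i => by rw [Subsingleton.elim ((f - g * h).coeff i) (0 : R)]; exact dvd_zero _,
      fun i => by
        rw [Subsingleton.elim ((s * g + t * h - 1).coeff i) (0 : R)]; exact dvd_zero _⟩
  -- write e = f - g*h = C a * u
  obtain ⟨u, hu⟩ : C a ∣ (f - g * h) := (C_dvd_iff_dvd_coeff a _).2 hfac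
  have hb : C a ∣ (s * g + t * h - 1) := (C_dvd_iff_dvd_coeff a _).2 hbez
  set e : R[X] := f - g * h with he
  set r : R[X] := a • ((s * u) %ₘ h) with hrdef
  set q : R[X] := a • ((s * u) /ₘ h) with hqdef
  have hse : s * e = r + h * q := by
    have hdiv := modByMonic_add_div (s * u) h
    rw [hu, hrdef, hqdef, smul_eq_C_mul, smul_eq_C_mul]
    linear_combination (-(C a)) * hdiv
  have hrd : r.degree < h.degree :=
    lt_of_le_of_lt (degree_smul_le a _) (degree_modByMonic_lt _ hmon)
  have hr : C a ∣ r := ⟨(s * u) %ₘ h, by rw [hrdef, smul_eq_C_mul]⟩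
  have hq : C a ∣ q := ⟨(s * u) /ₘ h, by rw [hqdef, smul_eq_C_mul]⟩
  have heC : C a ∣ e := ⟨u, hu⟩
  -- the lifted factors
  set g' : R[X] := g + t * e + q * g with hg'
  set h' : R[X] := h + r with hh'
  have hmon' : h'.Monic := hmon.add_of_left hrd
  have hdeg' : h'.degree = h.degree := degree_add_eq_left_of_degree_lt hrd
  have hgg : C a ∣ (g' - g) := by
    have : g' - g = t * e + q * g := by rw [hg']; ring
    rw [this]
    exact dvd_add (heC.mul_left t) (hq.mul_right g)
  have hhh : C a ∣ (h' - h) := by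
    have : h' - h = r := by rw [hh']; ring
    rw [this]; exact hr
  have hkey : f - g' * h' = -(e * (s * g + t * h - 1)) - (t * e + q * g) * r := by
    rw [hg', hh', he]
    linear_combination g * hse
  have hfac2 : C a * C a ∣ (f - g' * h') := by
    rw [hkey]
    exact dvd_sub ((mul_dvd_mul heC hb).neg_right)
      (mul_dvd_mul (dvd_add (heC.mul_left t) (hq.mul_right g)) hr)
  -- Bézout lift
  set d : R[X] := s * g' + t * h' - 1 with hd
  have hdC : C a ∣ d := by
    have : d = (s * g + t * h - 1) + s * (g' - g) + t * (h' - h) := by rw [hd]; ring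
    rw [this]
    exact dvd_add (dvd_add hb (hgg.mul_left s)) (hhh.mul_left t)
  set s' : R[X] := s - s * d with hs'
  set t' : R[X] := t - t * d with ht'
  have hbez2 : s' * g' + t' * h' - 1 = -(d * d) := by
    rw [hs', ht', hd]; ring
  have hbez2' : C a * C a ∣ (s' * g' + t' * h' - 1) := by
    rw [hbez2]; exact (mul_dvd_mul hdC hdC).neg_right
  have hCsq : ∀ p : R[X], C a * C a ∣ p → ∀ i, a ^ 2 ∣ p.coeff i := by
    intro p hp i
    have : C (a ^ 2) ∣ p := by rwa [pow_two, C_mul]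
    exact (C_dvd_iff_dvd_coeff _ _).1 this i
  exact ⟨g', h', s', t', hmon', hdeg',
    fun i => (C_dvd_iff_dvd_coeff a _).1 hgg i,
    fun i => (C_dvd_iff_dvd_coeff a _).1 hhh i,
    hCsq _ hfac2, hCsq _ hbez2'⟩
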